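/- For all polynomials f and g in ℂ[x,y] and every natural number N with N ≥ totalDegree f, the product of the corresponding operators is given by Φ(f) ∘ Φ(g) = Φ( Σ_{α=0}^{N} (1/α!) • (∂_y^α f) · (∂_x^α g) ), where the sum, products and derivatives on the right-hand side are taken in the commutative polynomial ring ℂ[x,y] and (1/α!) denotes the inverse of α! in ℂ. -/

import Mathlib

open Polynomial MvPolynomial

/-- Multiplication by X on ℂ[X]. -/
noncomputable def M : Module.End ℂ (Polynomial ℂ) := LinearMap.mulLeft ℂ Polynomial.X

/-- Formal derivative on ℂ[X]. -/
noncomputable def D : Module.End ℂ (Polynomial ℂ) := Polynomial.derivative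

/-- Normal-ordering map: extends x^p·y^q ↦ M^p ∘ D^q by ℂ-linearity. -/
noncomputable def Φ (f : MvPolynomial (Fin 2) ℂ) : Module.End ℂ (Polynomial ℂ) :=
  ∑ d ∈ f.support, f.coeff d • (M ^ d 0 * D ^ d 1)

/-- Φ as a linear map. -/
noncomputable def Φl : MvPolynomial (Fin 2) ℂ →ₗ[ℂ] Module.End ℂ (Polynomial ℂ) :=
  (Finsupp.linearCombination ℂ (fun d : Fin 2 →₀ ℕ => M ^ d 0 * D ^ d 1)).comp
    (AddMonoidAlgebra.coeffLinearEquiv ℂ).toLinearMap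

lemma Φ_eq (f : MvPolynomial (Fin 2) ℂ) : Φ f = Φl f := by
  rw [Φl]; erw [Finsupp.linearCombination_apply, Finsupp.sum]; rfl

lemma Φ_monomial (d : Fin 2 →₀ ℕ) (c : ℂ) :
    Φ (monomial d c) = c • (M ^ d 0 * D ^ d 1) := by
  rw [Φ_eq, Φl, ← MvPolynomial.single_eq_monomial]
  erw [Finsupp.linearCombination_single]

lemma D_mul_M : D * M = M * D + 1 := by
  apply LinearMap.ext; intro p
  simp [M, D, Module.End.mul_apply, derivative_mul]
  ring

lemma D_mul_M_pow_succ (k : ℕ) :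
    D * M ^ (k+1) = M ^ (k+1) * D + ((k+1 : ℕ) : ℂ) • M ^ k := by
  induction k with
  | zero => simpa using D_mul_M
  | succ n ih =>
    have h : D * M ^ (n+2) = (D * M ^ (n+1)) * M := by rw [mul_assoc, ← pow_succ]
    rw [h, ih, add_mul, smul_mul_assoc, mul_assoc, D_mul_M, mul_add, mul_one,
      ← mul_assoc, ← pow_succ, ← pow_succ]
    push_cast
    module

lemma D_mul_M_pow (k : ℕ) :
    D * M ^ k = M ^ k * D + ((k : ℕ) : ℂ) • M ^ (k-1) := by
  cases k with
  | zero => simp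
  | succ n => simpa using D_mul_M_pow_succ n

lemma nat1 (b s : ℕ) :
    (b+1).descFactorial (s+1) = b.descFactorial (s+1) + (s+1) * b.descFactorial s := by
  rw [Nat.descFactorial_eq_factorial_mul_choose, Nat.descFactorial_eq_factorial_mul_choose,
    Nat.descFactorial_eq_factorial_mul_choose, Nat.choose_succ_succ, Nat.factorial_succ]
  ring

lemma nat2 (b c s : ℕ) :
    (b+1).descFactorial (s+1) * c.choose (s+1) =
      b.descFactorial (s+1) * c.choose (s+1) + (b.descFactorial s * c.choose s) * (c - s) := by
  rw [nat1, add_mul]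
  congr 1
  rw [mul_assoc, mul_comm (s+1) _, mul_assoc, Nat.choose_succ_right_eq, ← mul_assoc]

lemma comm_formula (b c : ℕ) :
    D ^ b * M ^ c = ∑ α ∈ Finset.range (b+1),
      ((b.descFactorial α * c.choose α : ℕ) : ℂ) • (M ^ (c - α) * D ^ (b - α)) := by
  induction b with
  | zero => simp
  | succ b ih =>
    have h1 : D ^ (b+1) * M ^ c = D * (D ^ b * M ^ c) := by
      rw [pow_succ', mul_assoc]
    rw [h1, ih, Finset.mul_sum]
    have hterm : ∀ α ∈ Finset.range (b+1),
        D * (((b.descFactorial α * c.choose α : ℕ) : ℂ) • (M ^ (c - α) * D ^ (b - α))) =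
        ((b.descFactorial α * c.choose α : ℕ) : ℂ) • (M ^ (c - α) * D ^ (b + 1 - α))
        + (((b.descFactorial α * c.choose α) * (c - α) : ℕ) : ℂ) •
            (M ^ (c - α - 1) * D ^ (b - α)) := by
      intro α hα
      rw [Finset.mem_range] at hα
      have hb : b + 1 - α = (b - α) + 1 := by omega
      rw [mul_smul_comm, ← mul_assoc, D_mul_M_pow, add_mul, smul_mul_assoc, mul_assoc,
        ← pow_succ', smul_add, smul_smul, hb, ← Nat.cast_mul]
    rw [Finset.sum_congr rfl hterm, Finset.sum_add_distrib]
    conv_rhs => rw [Finset.sum_range_succ']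
    have hA : ∀ α ∈ Finset.range (b+1),
        (((b+1).descFactorial (α+1) * c.choose (α+1) : ℕ) : ℂ) •
          (M ^ (c - (α+1)) * D ^ (b + 1 - (α+1))) =
        ((b.descFactorial (α+1) * c.choose (α+1) : ℕ) : ℂ) •
          (M ^ (c - α - 1) * D ^ (b - α))
        + (((b.descFactorial α * c.choose α) * (c - α) : ℕ) : ℂ) •
            (M ^ (c - α - 1) * D ^ (b - α)) := by
      intro α hα
      have e1 : c - (α+1) = c - α - 1 := by omega
      have e2 : b + 1 - (α+1) = b - α := by omega
      rw [e1, e2, nat2, Nat.cast_add, add_smul]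
    rw [Finset.sum_congr rfl hA, Finset.sum_add_distrib]
    have hS1 : ∑ α ∈ Finset.range (b+1),
        ((b.descFactorial α * c.choose α : ℕ) : ℂ) • (M ^ (c - α) * D ^ (b + 1 - α)) =
        (∑ α ∈ Finset.range (b+1),
          ((b.descFactorial (α+1) * c.choose (α+1) : ℕ) : ℂ) •
            (M ^ (c - α - 1) * D ^ (b - α)))
        + ((b.descFactorial 0 * c.choose 0 : ℕ) : ℂ) • (M ^ (c - 0) * D ^ (b + 1 - 0)) := by
      rw [Finset.sum_range_succ']
      congr 1
      rw [Finset.sum_range_succ]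
      have hz : (b.descFactorial (b+1) * c.choose (b+1) : ℕ) = 0 := by
        rw [Nat.descFactorial_eq_zero_iff_lt.mpr (Nat.lt_succ_self b), zero_mul]
      rw [hz]
      simp only [Nat.cast_zero, zero_smul, add_zero]
      apply Finset.sum_congr rfl
      intro α hα
      rw [Finset.mem_range] at hα
      have e1 : c - (α+1) = c - α - 1 := by omega
      have e2 : b + 1 - (α+1) = b - α := by omega
      rw [e1, e2]
    rw [hS1]
    simp only [Nat.descFactorial_zero, Nat.choose_zero_right, mul_one, Nat.cast_one, one_smul,
      Nat.sub_zero]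
    abel

lemma pderiv_iter_monomial (i : Fin 2) (α : ℕ) (d : Fin 2 →₀ ℕ) (c : ℂ) :
    (⇑(pderiv i))^[α] (monomial d c) =
      monomial (d - Finsupp.single i α) (c * ((d i).descFactorial α)) := by
  induction α with
  | zero => simp
  | succ α ih =>
    rw [Function.iterate_succ_apply', ih, pderiv_monomial]
    have h1 : (d - Finsupp.single i α) i = d i - α := by
      rw [Finsupp.tsub_apply, Finsupp.single_eq_same]
    have h2 : d - Finsupp.single i α - Finsupp.single i 1 = d - Finsupp.single i (α+1) := by
      rw [tsub_tsub, ← Finsupp.single_add]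
    rw [h1, h2, Nat.descFactorial_succ]
    push_cast
    ring_nf

lemma key (d e : Fin 2 →₀ ℕ) (c k : ℂ) (N : ℕ) (hb : d 1 ≤ N) :
    Φ (monomial d c) * Φ (monomial e k) =
      Φ (∑ α ∈ Finset.range (N+1), ((α.factorial : ℂ)⁻¹) •
          ((⇑(pderiv (1:Fin 2)))^[α] (monomial d c) *
            (⇑(pderiv (0:Fin 2)))^[α] (monomial e k))) := by
  have hR : ∀ α : ℕ,
      (⇑(pderiv (1:Fin 2)))^[α] (monomial d c) * (⇑(pderiv (0:Fin 2)))^[α] (monomial e k)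
      = MvPolynomial.monomial ((d - Finsupp.single 1 α) + (e - Finsupp.single 0 α))
          ((c * ((d 1).descFactorial α)) * (k * ((e 0).descFactorial α))) := by
    intro α; rw [pderiv_iter_monomial, pderiv_iter_monomial, monomial_mul]
  have h0 : ∀ α : ℕ, (((d - Finsupp.single 1 α) + (e - Finsupp.single 0 α)) : Fin 2 →₀ ℕ) 0
      = d 0 + (e 0 - α) := by
    intro α
    simp [Finsupp.add_apply, Finsupp.tsub_apply, Finsupp.single_apply]
  have h1 : ∀ α : ℕ, (((d - Finsupp.single 1 α) + (e - Finsupp.single 0 α)) : Fin 2 →₀ ℕ) 1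
      = (d 1 - α) + e 1 := by
    intro α
    simp [Finsupp.add_apply, Finsupp.tsub_apply, Finsupp.single_apply]
  have hRHS : Φ (∑ α ∈ Finset.range (N+1), ((α.factorial : ℂ)⁻¹) •
          ((⇑(pderiv (1:Fin 2)))^[α] (monomial d c) *
            (⇑(pderiv (0:Fin 2)))^[α] (monomial e k)))
      = ∑ α ∈ Finset.range (N+1),
          ((α.factorial : ℂ)⁻¹ * ((c * ((d 1).descFactorial α)) * (k * ((e 0).descFactorial α)))) •
            (M ^ (d 0 + (e 0 - α)) * D ^ ((d 1 - α) + e 1)) := by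
    rw [Φ_eq, map_sum]
    apply Finset.sum_congr rfl
    intro α _
    rw [map_smul, hR, ← Φ_eq, Φ_monomial, h0 α, h1 α, smul_smul]
  rw [hRHS]
  rw [Φ_monomial, Φ_monomial, smul_mul_smul_comm, mul_assoc, ← mul_assoc (D ^ d 1),
    comm_formula, Finset.sum_mul, Finset.mul_sum]
  have hL : ∀ α ∈ Finset.range (d 1 + 1),
      M ^ d 0 * ((((d 1).descFactorial α * (e 0).choose α : ℕ) : ℂ) •
        (M ^ (e 0 - α) * D ^ (d 1 - α)) * D ^ e 1)
      = (((d 1).descFactorial α * (e 0).choose α : ℕ) : ℂ) •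
          (M ^ (d 0 + (e 0 - α)) * D ^ (d 1 - α + e 1)) := by
    intro α _
    rw [smul_mul_assoc, mul_smul_comm, pow_add, pow_add, mul_assoc, mul_assoc]
  rw [Finset.smul_sum]
  rw [Finset.sum_congr rfl (fun α hα => by rw [hL α hα, smul_smul])]
  rw [← Finset.sum_subset (Finset.range_subset_range.mpr (by omega : d 1 + 1 ≤ N + 1))
    (fun α _ hα => by
      rw [Finset.mem_range, not_lt] at hα
      have hz : (d 1).descFactorial α = 0 :=
        Nat.descFactorial_eq_zero_iff_lt.mpr (by omega)
      simp [hz])]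
  apply Finset.sum_congr rfl
  intro α _
  congr 1
  have hfac : (α.factorial : ℂ) ≠ 0 := Nat.cast_ne_zero.mpr (Nat.factorial_ne_zero α)
  rw [Nat.descFactorial_eq_factorial_mul_choose (e 0) α]
  push_cast
  field_simp

/-- Formula (2.3): multiplication in the Heisenberg algebra expressed through
commutative multiplication and differentiation of polynomials. -/
theorem heisenberg_product_formula (f g : MvPolynomial (Fin 2) ℂ) (N : ℕ)
    (hN : f.totalDegree ≤ N) :
    Φ f * Φ g =
      Φ (∑ α ∈ Finset.range (N + 1),
          ((α.factorial : ℂ)⁻¹) •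
            ((⇑(pderiv (1 : Fin 2)))^[α] f * (⇑(pderiv (0 : Fin 2)))^[α] g)) := by
  have hiter : ∀ (i : Fin 2) (α : ℕ) (p : MvPolynomial (Fin 2) ℂ),
      (⇑(pderiv i))^[α] p = (((pderiv i).toLinearMap) ^ α) p := by
    intro i α p
    rw [Module.End.pow_apply]
    rfl
  have hLHS : Φ f * Φ g = ∑ d ∈ f.support, ∑ e ∈ g.support,
      Φ (monomial d (coeff d f)) * Φ (monomial e (coeff e g)) := by
    conv_lhs => rw [← support_sum_monomial_coeff f, ← support_sum_monomial_coeff g]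
    rw [Φ_eq, Φ_eq, map_sum, map_sum, Finset.sum_mul_sum]
    exact Finset.sum_congr rfl fun d _ => Finset.sum_congr rfl fun e _ => by
      rw [← Φ_eq, ← Φ_eq]
  have hfg : ∀ α : ℕ, (⇑(pderiv (1:Fin 2)))^[α] f * (⇑(pderiv (0:Fin 2)))^[α] g
      = ∑ d ∈ f.support, ∑ e ∈ g.support,
          ((⇑(pderiv (1:Fin 2)))^[α] (monomial d (coeff d f)) *
            (⇑(pderiv (0:Fin 2)))^[α] (monomial e (coeff e g))) := by
    intro α
    conv_lhs => rw [← support_sum_monomial_coeff f, ← support_sum_monomial_coeff g]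
    rw [hiter 1 α, hiter 0 α, map_sum, map_sum, Finset.sum_mul_sum]
    exact Finset.sum_congr rfl fun d _ => Finset.sum_congr rfl fun e _ => by
      rw [← hiter, ← hiter]
  have hRHS : (∑ α ∈ Finset.range (N + 1),
          ((α.factorial : ℂ)⁻¹) •
            ((⇑(pderiv (1 : Fin 2)))^[α] f * (⇑(pderiv (0 : Fin 2)))^[α] g))
      = ∑ d ∈ f.support, ∑ e ∈ g.support, ∑ α ∈ Finset.range (N + 1),
          ((α.factorial : ℂ)⁻¹) •
            ((⇑(pderiv (1:Fin 2)))^[α] (monomial d (coeff d f)) *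
              (⇑(pderiv (0:Fin 2)))^[α] (monomial e (coeff e g))) := by
    rw [Finset.sum_congr rfl fun α _ => by rw [hfg α, Finset.smul_sum]]
    rw [Finset.sum_comm]
    exact Finset.sum_congr rfl fun d _ => by
      rw [Finset.sum_congr rfl fun α (_ : α ∈ Finset.range (N+1)) => Finset.smul_sum,
        Finset.sum_comm]
  rw [hLHS, hRHS, Φ_eq, map_sum]
  apply Finset.sum_congr rfl
  intro d hd
  rw [map_sum]
  apply Finset.sum_congr rfl
  intro e he
  rw [← Φ_eq]
  apply key
  have h1 : d 1 ≤ d.sum fun _ n => n := by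
    by_cases h : d 1 = 0
    · simp [h]
    · exact Finset.single_le_sum (f := fun a => d a) (fun i _ => Nat.zero_le _)
        (Finsupp.mem_support_iff.mpr h)
  exact le_trans (le_trans h1 (le_totalDegree hd)) hN
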